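/- arXiv:1310.3204 — 2 statements merged into one kernel-verified Lean document; each statement's English description precedes it below -/
import Mathlib

section
/- The extended double cover G* and the cartesian product G × K₂ are Laplacian cospectral if and only if G = K₁ or G is bipartite. -/
open Matrix Polynomial BigOperators
open scoped Classical

/-- The extended double cover `G*` of a graph `G`. -/
def edc {V : Type*} (G : SimpleGraph V) : SimpleGraph (V ⊕ V) where
  Adj u v := match u, v with
    | Sum.inl i, Sum.inr j => i = j ∨ G.Adj i j
    | Sum.inr i, Sum.inl j => i = j ∨ G.Adj i j
    | _, _ => False
  symm := ⟨by rintro (i|i) (j|j) h <;> simp_all <;> exact h.imp Eq.symm fun hh => G.adj_symm hh⟩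
  loopless := ⟨by rintro (i|i) h <;> simp_all⟩

/-- The Laplacian matrix `L = D − A` of a graph. -/
noncomputable def lap {V : Type*} [Fintype V] [DecidableEq V] (G : SimpleGraph V) :
    Matrix V V ℝ :=
  Matrix.diagonal (fun i => (G.degree i : ℝ)) - G.adjMatrix ℝ

namespace Stmt13Aux

section General
variable {m : Type*} [Fintype m] [DecidableEq m]

lemma charpoly_conj (P P' M : Matrix m m ℝ) (h : P * P' = 1) (h' : P' * P = 1) :
    (P * M * P').charpoly = M.charpoly := by
  have hmap : (C : ℝ →+* ℝ[X]).mapMatrix P * (C : ℝ →+* ℝ[X]).mapMatrix P' = 1 := by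
    rw [← _root_.map_mul, h, _root_.map_one]
  have key : charmatrix (P * M * P') =
      (C : ℝ →+* ℝ[X]).mapMatrix P * charmatrix M * (C : ℝ →+* ℝ[X]).mapMatrix P' := by
    unfold charmatrix
    rw [_root_.map_mul, _root_.map_mul, mul_sub, sub_mul]
    congr 1
    have hc := scalar_commute (n := m) (X : ℝ[X]) (fun r' => Commute.all _ _)
    rw [mul_assoc, (hc _).eq, ← mul_assoc, hmap, one_mul]
  rw [Matrix.charpoly, Matrix.charpoly, key, det_mul, det_mul, mul_right_comm,
    ← det_mul, hmap, det_one, one_mul]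

lemma charpoly_diagonal (v : m → ℝ) : (diagonal v).charpoly = ∏ i, (X - C (v i)) := by
  have hch : charmatrix (diagonal v) = diagonal fun i => X - C (v i) := by
    ext i j
    by_cases hij : i = j
    · subst hij; simp
    · simp [charmatrix_apply, diagonal_apply_ne _ hij]
  rw [Matrix.charpoly, hch, det_diagonal]

lemma hermitian_charpoly (M : Matrix m m ℝ) (hM : M.IsHermitian) :
    M.charpoly = ∏ i, (X - C (hM.eigenvalues i)) := by
  have h1 : (hM.eigenvectorUnitary : Matrix m m ℝ) *
      star (hM.eigenvectorUnitary : Matrix m m ℝ) = 1 := by simp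
  have h2 : star (hM.eigenvectorUnitary : Matrix m m ℝ) *
      (hM.eigenvectorUnitary : Matrix m m ℝ) = 1 := by simp
  conv_lhs => rw [hM.spectral_theorem, Unitary.conjStarAlgAut_apply]
  rw [charpoly_conj _ _ _ h1 h2]
  have : (RCLike.ofReal ∘ hM.eigenvalues : m → ℝ) = hM.eigenvalues := by
    ext i; simp [RCLike.ofReal]
  rw [this, charpoly_diagonal]

lemma trace_pow_hermitian (M : Matrix m m ℝ) (hM : M.IsHermitian) (k : ℕ) :
    (M ^ k).trace = ∑ i, hM.eigenvalues i ^ k := by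
  have h1 : (hM.eigenvectorUnitary : Matrix m m ℝ) *
      star (hM.eigenvectorUnitary : Matrix m m ℝ) = 1 := by simp
  have h2 : star (hM.eigenvectorUnitary : Matrix m m ℝ) *
      (hM.eigenvectorUnitary : Matrix m m ℝ) = 1 := by simp
  set U := (hM.eigenvectorUnitary : Matrix m m ℝ) with hU
  have hd : (RCLike.ofReal ∘ hM.eigenvalues : m → ℝ) = hM.eigenvalues := by
    ext i; simp [RCLike.ofReal]
  have hspec : M = U * diagonal hM.eigenvalues * star U := by
    conv_lhs => rw [hM.spectral_theorem, Unitary.conjStarAlgAut_apply]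
    rw [hd]
  have hcancel : ∀ X : Matrix m m ℝ, star U * (U * X) = X := fun X => by
    rw [← mul_assoc, h2, one_mul]
  have hpow : M ^ k = U * (diagonal hM.eigenvalues) ^ k * star U := by
    induction k with
    | zero => simpa using h1.symm
    | succ k ih =>
      calc M ^ (k + 1) = (U * (diagonal hM.eigenvalues) ^ k * star U) *
            (U * diagonal hM.eigenvalues * star U) := by rw [pow_succ, ih, ← hspec]
        _ = U * (diagonal hM.eigenvalues) ^ (k + 1) * star U := by
            rw [pow_succ]
            simp only [mul_assoc, hcancel]
  rw [hpow, Matrix.trace_mul_cycle, h2, one_mul, diagonal_pow, trace_diagonal]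
  simp

lemma trace_pow_eq_of_charpoly_eq (M N : Matrix m m ℝ) (hM : M.IsHermitian) (hN : N.IsHermitian)
    (h : M.charpoly = N.charpoly) (k : ℕ) : (M ^ k).trace = (N ^ k).trace := by
  have h2 : (∏ i, (X - C (hM.eigenvalues i))) = ∏ i, (X - C (hN.eigenvalues i)) := by
    rw [← hermitian_charpoly M hM, ← hermitian_charpoly N hN, h]
  have h3 : Finset.univ.val.map hM.eigenvalues = Finset.univ.val.map hN.eigenvalues := by
    have := congrArg Polynomial.roots h2
    have e1 : ∀ (f : m → ℝ), (Multiset.map (fun i => X - C (f i)) Finset.univ.val) =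
        Multiset.map (fun a => X - C a) (Finset.univ.val.map f) := fun f => by
      rw [Multiset.map_map]; rfl
    rwa [Finset.prod_eq_multiset_prod, Finset.prod_eq_multiset_prod, e1, e1,
      Polynomial.roots_multiset_prod_X_sub_C, Polynomial.roots_multiset_prod_X_sub_C] at this
  rw [trace_pow_hermitian M hM k, trace_pow_hermitian N hN k]
  calc ∑ i, hM.eigenvalues i ^ k = ((Finset.univ.val.map hM.eigenvalues).map (· ^ k)).sum := by
        rw [Multiset.map_map]; rfl
    _ = ((Finset.univ.val.map hN.eigenvalues).map (· ^ k)).sum := by rw [h3]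
    _ = ∑ i, hN.eigenvalues i ^ k := by rw [Multiset.map_map]; rfl

lemma charpoly_fromBlocks_symm (X Y : Matrix m m ℝ) :
    (fromBlocks X Y Y X).charpoly = (X + Y).charpoly * (X - Y).charpoly := by
  set P : Matrix (m ⊕ m) (m ⊕ m) ℝ := fromBlocks 1 1 1 (-1) with hP
  have hPP : P * P = (2 : ℝ) • 1 := by
    rw [hP, fromBlocks_multiply]
    rw [← fromBlocks_one, fromBlocks_smul]
    congr 1 <;> simp [two_smul] <;> ring_nf <;> simp [two_smul]
  have h1 : P * ((2:ℝ)⁻¹ • P) = 1 := by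
    rw [mul_smul_comm, hPP, smul_smul]; norm_num
  have h2 : ((2:ℝ)⁻¹ • P) * P = 1 := by
    rw [smul_mul_assoc, hPP, smul_smul]; norm_num
  have key : P * fromBlocks X Y Y X * ((2:ℝ)⁻¹ • P) =
      fromBlocks (X + Y) 0 0 (X - Y) := by
    rw [mul_smul_comm, hP, fromBlocks_multiply, fromBlocks_multiply, fromBlocks_smul]
    congr 1 <;> simp [two_smul] <;> ring_nf <;>
      module
  calc (fromBlocks X Y Y X).charpoly
      = (P * fromBlocks X Y Y X * ((2:ℝ)⁻¹ • P)).charpoly := (charpoly_conj _ _ _ h1 h2).symm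
    _ = (X + Y).charpoly * (X - Y).charpoly := by rw [key, charpoly_fromBlocks_zero₁₂]

end General

variable {n : ℕ} (G : SimpleGraph (Fin n))

lemma adj_nonneg (i j : Fin n) : 0 ≤ G.adjMatrix ℝ i j := by
  rw [SimpleGraph.adjMatrix_apply]; positivity

lemma adj_pow_nonneg (k : ℕ) (i j : Fin n) : 0 ≤ (G.adjMatrix ℝ ^ k) i j := by
  induction k generalizing i j with
  | zero => rw [pow_zero, Matrix.one_apply]; positivity
  | succ k ih =>
    rw [pow_succ, Matrix.mul_apply]
    exact Finset.sum_nonneg fun l _ => mul_nonneg (ih i l) (adj_nonneg G l j)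

lemma key_ineq (d : Fin n → ℝ) (hd : ∀ i, 0 ≤ d i) (k : ℕ) :
    (∀ i j, (1 - (-1:ℝ)^k) * (G.adjMatrix ℝ ^ k) i j ≤
      ((diagonal d + G.adjMatrix ℝ)^k - (diagonal d - G.adjMatrix ℝ)^k) i j) ∧
    (∀ i j, (1 + (-1:ℝ)^k) * (G.adjMatrix ℝ ^ k) i j ≤
      ((diagonal d + G.adjMatrix ℝ)^k + (diagonal d - G.adjMatrix ℝ)^k) i j) := by
  set A := G.adjMatrix ℝ with hA
  set Q := diagonal d + A with hQ
  set L := diagonal d - A with hL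
  induction k with
  | zero =>
    constructor <;> intro i j <;> simp [Matrix.add_apply, Matrix.sub_apply] <;> linarith
  | succ k ih =>
    obtain ⟨ih1, ih2⟩ := ih
    have hApow : ∀ i j, 0 ≤ (A ^ k) i j := adj_pow_nonneg G k
    have hsgn : ((-1:ℝ)) ^ (k+1) = -((-1:ℝ)^k) := by ring
    have hsub_nonneg : ∀ i j, 0 ≤ (Q^k - L^k) i j := by
      intro i j
      refine le_trans ?_ (ih1 i j)
      rcases neg_one_pow_eq_or ℝ k with h | h <;> rw [h] <;> nlinarith [hApow i j]
    have hadd_nonneg : ∀ i j, 0 ≤ (Q^k + L^k) i j := by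
      intro i j
      refine le_trans ?_ (ih2 i j)
      rcases neg_one_pow_eq_or ℝ k with h | h <;> rw [h] <;> nlinarith [hApow i j]
    have hDiff : Q ^ (k+1) - L ^ (k+1) = diagonal d * (Q^k - L^k) + A * (Q^k + L^k) := by
      rw [pow_succ', pow_succ', hQ, hL]; noncomm_ring
    have hSum : Q ^ (k+1) + L ^ (k+1) = diagonal d * (Q^k + L^k) + A * (Q^k - L^k) := by
      rw [pow_succ', pow_succ', hQ, hL]; noncomm_ring
    constructor
    · intro i j
      rw [hDiff, Matrix.add_apply, Matrix.diagonal_mul, Matrix.mul_apply]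
      have step1 : (1 - (-1:ℝ)^(k+1)) * (A ^ (k+1)) i j =
          ∑ l, A i l * ((1 + (-1:ℝ)^k) * (A ^ k) l j) := by
        rw [show ((A : Matrix (Fin n) (Fin n) ℝ) ^ (k+1)) = A * A ^ k from pow_succ' A k,
          Matrix.mul_apply, Finset.mul_sum]
        apply Finset.sum_congr rfl
        intro l _
        ring
      rw [step1]
      have t1 : 0 ≤ d i * (Q^k - L^k) i j := mul_nonneg (hd i) (hsub_nonneg i j)
      have t2 : ∑ l, A i l * ((1 + (-1:ℝ)^k) * (A ^ k) l j) ≤ ∑ l, A i l * (Q^k + L^k) l j :=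
        Finset.sum_le_sum fun l _ => mul_le_mul_of_nonneg_left (ih2 l j) (adj_nonneg G i l)
      linarith
    · intro i j
      rw [hSum, Matrix.add_apply, Matrix.diagonal_mul, Matrix.mul_apply]
      have step1 : (1 + (-1:ℝ)^(k+1)) * (A ^ (k+1)) i j =
          ∑ l, A i l * ((1 - (-1:ℝ)^k) * (A ^ k) l j) := by
        rw [show ((A : Matrix (Fin n) (Fin n) ℝ) ^ (k+1)) = A * A ^ k from pow_succ' A k,
          Matrix.mul_apply, Finset.mul_sum]
        apply Finset.sum_congr rfl
        intro l _
        ring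
      rw [step1]
      have t1 : 0 ≤ d i * (Q^k + L^k) i j := mul_nonneg (hd i) (hadd_nonneg i j)
      have t2 : ∑ l, A i l * ((1 - (-1:ℝ)^k) * (A ^ k) l j) ≤ ∑ l, A i l * (Q^k - L^k) l j :=
        Finset.sum_le_sum fun l _ => mul_le_mul_of_nonneg_left (ih1 l j) (adj_nonneg G i l)
      linarith

lemma trace_adj_pow_eq_zero (d : Fin n → ℝ) (hd : ∀ i, 0 ≤ d i)
    (h : ∀ k : ℕ, ((diagonal d + G.adjMatrix ℝ) ^ k).trace =
      ((diagonal d - G.adjMatrix ℝ) ^ k).trace)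
    (k : ℕ) (hk : Odd k) (i : Fin n) : (G.adjMatrix ℝ ^ k) i i = 0 := by
  have h1 := (key_ineq G d hd k).1
  have hs : (1 - (-1:ℝ)^k) = 2 := by rw [hk.neg_one_pow]; norm_num
  have hsum : ∑ j, 2 * (G.adjMatrix ℝ ^ k) j j ≤
      ((diagonal d + G.adjMatrix ℝ)^k - (diagonal d - G.adjMatrix ℝ)^k).trace := by
    rw [Matrix.trace]
    refine Finset.sum_le_sum fun j _ => ?_
    rw [← hs]
    exact h1 j j
  rw [Matrix.trace_sub, h k, sub_self] at hsum
  have hz : ∑ j, 2 * (G.adjMatrix ℝ ^ k) j j = 0 :=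
    le_antisymm hsum (Finset.sum_nonneg fun j _ => by
      have := adj_pow_nonneg G k j j; linarith)
  have := (Finset.sum_eq_zero_iff_of_nonneg (fun j _ => by
      have := adj_pow_nonneg G k j j
      linarith : ∀ j ∈ Finset.univ, 0 ≤ 2 * (G.adjMatrix ℝ ^ k) j j)).mp hz
  have := this i (Finset.mem_univ i)
  linarith

lemma even_closed_walk (h0 : ∀ k, Odd k → ∀ i, (G.adjMatrix ℝ ^ k) i i = 0)
    (v : Fin n) (p : G.Walk v v) : Even p.length := by
  by_contra hodd
  rw [Nat.not_even_iff_odd] at hodd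
  have h := h0 p.length hodd v
  rw [SimpleGraph.adjMatrix_pow_apply_eq_card_walk] at h
  have hc : Fintype.card {q : G.Walk v v | q.length = p.length} = 0 := by exact_mod_cast h
  rw [Fintype.card_eq_zero_iff] at hc
  exact hc.elim ⟨p, rfl⟩

lemma colorable_of_even_closed (h : ∀ v (p : G.Walk v v), Even p.length) :
    G.Colorable 2 := by
  classical
  have hre : ∀ v : Fin n, G.Reachable ((G.connectedComponentMk v).out) v := fun v =>
    SimpleGraph.ConnectedComponent.exact (by exact Quot.out_eq _)
  let w : ∀ v : Fin n, G.Walk ((G.connectedComponentMk v).out) v := fun v => (hre v).some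
  refine (SimpleGraph.Coloring.mk
    (fun v => (⟨(w v).length % 2, Nat.mod_lt _ (by norm_num)⟩ : Fin 2)) ?_).colorable
  intro u v huv heq
  rw [Fin.mk.injEq] at heq
  have hcc : G.connectedComponentMk v = G.connectedComponentMk u :=
    SimpleGraph.ConnectedComponent.sound huv.symm.reachable
  have hout : (G.connectedComponentMk v).out = (G.connectedComponentMk u).out := by rw [hcc]
  have hev := h _ ((w u).append (SimpleGraph.Walk.cons huv ((w v).copy hout rfl).reverse))
  rw [SimpleGraph.Walk.length_append, SimpleGraph.Walk.length_cons,
    SimpleGraph.Walk.length_reverse, SimpleGraph.Walk.length_copy, Nat.even_iff] at hev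
  omega

lemma conj_of_colorable (d : Fin n → ℝ) (hc : G.Colorable 2) :
    (diagonal d + G.adjMatrix ℝ).charpoly = (diagonal d - G.adjMatrix ℝ).charpoly := by
  obtain ⟨C⟩ := hc
  set s : Fin n → ℝ := fun i => if C i = 0 then 1 else -1 with hsdef
  have hs : ∀ i, s i * s i = 1 := by
    intro i; by_cases h : C i = 0 <;> simp [hsdef, h]
  have hSS : diagonal s * diagonal s = 1 := by
    rw [diagonal_mul_diagonal, show (fun i => s i * s i) = fun _ => (1:ℝ) from funext hs,
      diagonal_one]
  have key : diagonal s * (diagonal d + G.adjMatrix ℝ) * diagonal s =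
      diagonal d - G.adjMatrix ℝ := by
    have h2 : ∀ a : Fin 2, a = 0 ∨ a = 1 := by decide
    ext i j
    rw [Matrix.mul_diagonal, Matrix.diagonal_mul, Matrix.add_apply, Matrix.sub_apply]
    by_cases hij : i = j
    · subst hij
      simp [hs i, mul_comm, mul_assoc, mul_left_comm]
    · rw [diagonal_apply_ne _ hij]
      by_cases hadj : G.Adj i j
      · have hC := C.valid hadj
        have hss : s i * s j = -1 := by
          rcases h2 (C i) with h | h <;> rcases h2 (C j) with h' | h' <;>
            simp_all [hsdef] <;> simp [s, h, h']
        rw [SimpleGraph.adjMatrix_apply, if_pos hadj]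
        linear_combination hss
      · rw [SimpleGraph.adjMatrix_apply, if_neg hadj]
        ring
  rw [← key, charpoly_conj _ _ _ hSS hSS]

lemma edc_adj_ll (i j : Fin n) : ¬ (edc G).Adj (Sum.inl i) (Sum.inl j) := by
  intro h; exact h
lemma edc_adj_rr (i j : Fin n) : ¬ (edc G).Adj (Sum.inr i) (Sum.inr j) := by
  intro h; exact h
lemma edc_adj_lr (i j : Fin n) : (edc G).Adj (Sum.inl i) (Sum.inr j) ↔ (i = j ∨ G.Adj i j) :=
  Iff.rfl
lemma edc_adj_rl (i j : Fin n) : (edc G).Adj (Sum.inr i) (Sum.inl j) ↔ (i = j ∨ G.Adj i j) :=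
  Iff.rfl

lemma edc_neighbor_inl (i : Fin n) :
    (edc G).neighborFinset (Sum.inl i) =
      (insert i (G.neighborFinset i)).map ⟨Sum.inr, Sum.inr_injective⟩ := by
  ext x
  cases x with
  | inl j => simp [SimpleGraph.mem_neighborFinset, edc_adj_ll]
  | inr j =>
    simp [SimpleGraph.mem_neighborFinset, edc_adj_lr, eq_comm]

lemma edc_neighbor_inr (i : Fin n) :
    (edc G).neighborFinset (Sum.inr i) =
      (insert i (G.neighborFinset i)).map ⟨Sum.inl, Sum.inl_injective⟩ := by
  ext x
  cases x with
  | inl j =>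
    simp [SimpleGraph.mem_neighborFinset, edc_adj_rl, eq_comm]
  | inr j => simp [SimpleGraph.mem_neighborFinset, edc_adj_rr]

lemma edc_degree_inl (i : Fin n) : (edc G).degree (Sum.inl i) = G.degree i + 1 := by
  rw [SimpleGraph.degree, edc_neighbor_inl, Finset.card_map,
    Finset.card_insert_of_notMem (by simp), SimpleGraph.degree]

lemma edc_degree_inr (i : Fin n) : (edc G).degree (Sum.inr i) = G.degree i + 1 := by
  rw [SimpleGraph.degree, edc_neighbor_inr, Finset.card_map,
    Finset.card_insert_of_notMem (by simp), SimpleGraph.degree]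

lemma lap_edc_eq : lap (edc G) = fromBlocks
    (diagonal fun i => (G.degree i : ℝ) + 1) (-(1 + G.adjMatrix ℝ))
    (-(1 + G.adjMatrix ℝ)) (diagonal fun i => (G.degree i : ℝ) + 1) := by
  unfold lap
  ext x y
  cases x with
  | inl i =>
    cases y with
    | inl j =>
      rw [Matrix.sub_apply, SimpleGraph.adjMatrix_apply, if_neg (edc_adj_ll G i j)]
      by_cases hij : i = j
      · subst hij
        simp [fromBlocks, edc_degree_inl]
      · rw [diagonal_apply_ne _ (by simp [hij])]
        simp [fromBlocks, diagonal_apply_ne _ hij]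
    | inr j =>
      rw [Matrix.sub_apply, diagonal_apply_ne _ (by simp), SimpleGraph.adjMatrix_apply]
      by_cases hij : i = j
      · subst hij
        rw [if_pos ((edc_adj_lr G i i).mpr (Or.inl rfl))]
        simp [fromBlocks, Matrix.one_apply]
      · by_cases hadj : G.Adj i j
        · rw [if_pos ((edc_adj_lr G i j).mpr (Or.inr hadj))]
          simp [fromBlocks, Matrix.one_apply_ne hij, hadj]
        · rw [if_neg (fun hcon => by
            rcases (edc_adj_lr G i j).mp hcon with h | h
            exacts [hij h, hadj h])]
          simp [fromBlocks, Matrix.one_apply_ne hij, hadj]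
  | inr i =>
    cases y with
    | inl j =>
      rw [Matrix.sub_apply, diagonal_apply_ne _ (by simp), SimpleGraph.adjMatrix_apply]
      by_cases hij : i = j
      · subst hij
        rw [if_pos ((edc_adj_rl G i i).mpr (Or.inl rfl))]
        simp [fromBlocks, Matrix.one_apply]
      · by_cases hadj : G.Adj i j
        · rw [if_pos ((edc_adj_rl G i j).mpr (Or.inr hadj))]
          simp [fromBlocks, Matrix.one_apply_ne hij, hadj]
        · rw [if_neg (fun hcon => by
            rcases (edc_adj_rl G i j).mp hcon with h | h
            exacts [hij h, hadj h])]
          simp [fromBlocks, Matrix.one_apply_ne hij, hadj]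
    | inr j =>
      rw [Matrix.sub_apply, SimpleGraph.adjMatrix_apply, if_neg (edc_adj_rr G i j)]
      by_cases hij : i = j
      · subst hij
        simp [fromBlocks, edc_degree_inr]
      · rw [diagonal_apply_ne _ (by simp [hij])]
        simp [fromBlocks, diagonal_apply_ne _ hij]

def spe (n : ℕ) : (Fin n ⊕ Fin n) ≃ (Fin n × Fin 2) where
  toFun := Sum.elim (fun i => (i, 0)) (fun i => (i, 1))
  invFun := fun p => if p.2 = 0 then Sum.inl p.1 else Sum.inr p.1
  left_inv := by rintro (i|i) <;> simp
  right_inv := by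
    rintro ⟨i, a⟩
    fin_cases a <;> simp

lemma diag_case (i : Fin n) (a : Fin 2) :
    (lap (G □ (⊤ : SimpleGraph (Fin 2)))) (i, a) (i, a) = (lap G + 1) i i := by
  unfold lap
  rw [Matrix.sub_apply, SimpleGraph.adjMatrix_apply,
    if_neg (by rw [SimpleGraph.boxProd_adj]; simp), diagonal_apply_eq,
    SimpleGraph.degree_boxProd,
    Matrix.add_apply, Matrix.sub_apply, diagonal_apply_eq, SimpleGraph.adjMatrix_apply,
    if_neg (G.irrefl), Matrix.one_apply_eq]
  norm_num [SimpleGraph.complete_graph_degree]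

lemma offdiag_case (i j : Fin n) (a : Fin 2) (hij : i ≠ j) :
    (lap (G □ (⊤ : SimpleGraph (Fin 2)))) (i, a) (j, a) = (lap G + 1) i j := by
  unfold lap
  rw [Matrix.sub_apply, diagonal_apply_ne _ (by simp [hij]), Matrix.add_apply,
    Matrix.sub_apply, diagonal_apply_ne _ hij, Matrix.one_apply_ne hij,
    SimpleGraph.adjMatrix_apply, SimpleGraph.adjMatrix_apply]
  by_cases hadj : G.Adj i j
  · rw [if_pos (by rw [SimpleGraph.boxProd_adj]; exact Or.inl ⟨hadj, rfl⟩), if_pos hadj]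
    ring
  · rw [if_neg (by
        rw [SimpleGraph.boxProd_adj]
        rintro (⟨h, -⟩ | ⟨-, h⟩)
        exacts [hadj h, hij h]), if_neg hadj]
    ring

lemma cross_case (i j : Fin n) (a b : Fin 2) (hab : a ≠ b) :
    (lap (G □ (⊤ : SimpleGraph (Fin 2)))) (i, a) (j, b) = (-1 : Matrix (Fin n) (Fin n) ℝ) i j := by
  unfold lap
  rw [Matrix.sub_apply, diagonal_apply_ne _ (by simp [hab]), zero_sub,
    SimpleGraph.adjMatrix_apply, Matrix.neg_apply]
  by_cases hij : i = j
  · subst hij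
    rw [if_pos (by rw [SimpleGraph.boxProd_adj]; exact Or.inr ⟨hab, rfl⟩), Matrix.one_apply_eq]
  · rw [if_neg (by
        rw [SimpleGraph.boxProd_adj]
        rintro (⟨-, h⟩ | ⟨-, h⟩)
        exacts [hab h, hij h]), Matrix.one_apply_ne hij]

lemma lap_prod_eq :
    reindex (spe n).symm (spe n).symm (lap (G □ (⊤ : SimpleGraph (Fin 2)))) =
      fromBlocks (lap G + 1) (-1) (-1) (lap G + 1) := by
  ext x y
  rw [reindex_apply, submatrix_apply]
  simp only [Equiv.symm_symm]
  cases x with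
  | inl i =>
    cases y with
    | inl j =>
      show (lap (G □ ⊤)) (i, 0) (j, 0) = (lap G + 1) i j
      by_cases hij : i = j
      · subst hij; exact diag_case G i 0
      · exact offdiag_case G i j 0 hij
    | inr j =>
      exact cross_case G i j 0 1 (by decide)
  | inr i =>
    cases y with
    | inl j =>
      exact cross_case G i j 1 0 (by decide)
    | inr j =>
      show (lap (G □ ⊤)) (i, 1) (j, 1) = (lap G + 1) i j
      by_cases hij : i = j
      · subst hij; exact diag_case G i 1
      · exact offdiag_case G i j 1 hij

end Stmt13Aux

open Stmt13Aux

/-- The extended double cover `G*` and the cartesian product `G × K₂`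
are Laplacian cospectral if and only if `G = K₁` (i.e. `G` has one vertex) or `G`
is bipartite. -/
theorem stmt13 {n : ℕ} (hn : 0 < n) (G : SimpleGraph (Fin n)) :
    (lap (edc G)).charpoly = (lap (G □ (⊤ : SimpleGraph (Fin 2)))).charpoly ↔
      n = 1 ∨ G.Colorable 2 := by
  classical
  set A := G.adjMatrix ℝ with hA
  set d : Fin n → ℝ := fun i => (G.degree i : ℝ) + 2 with hd
  have hdiag1 : (diagonal fun i => (G.degree i : ℝ) + 1) =
      diagonal (fun i => (G.degree i : ℝ)) + 1 := by
    rw [← diagonal_one, diagonal_add]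
  have hdiag2 : diagonal d = diagonal (fun i => (G.degree i : ℝ)) + 1 + 1 := by
    ext i j
    by_cases hij : i = j
    · subst hij
      simp [hd, Matrix.add_apply, Matrix.one_apply]
      ring
    · simp [diagonal_apply_ne _ hij, Matrix.add_apply, Matrix.one_apply_ne hij]
  have hedc : (lap (edc G)).charpoly = (lap G).charpoly * (diagonal d + A).charpoly := by
    rw [lap_edc_eq, charpoly_fromBlocks_symm]
    congr 2
    · rw [hdiag1]
      unfold lap
      abel
    · rw [hdiag1, hdiag2]
      abel
  have hprod : (lap (G □ (⊤ : SimpleGraph (Fin 2)))).charpoly =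
      (lap G).charpoly * (diagonal d - A).charpoly := by
    rw [← Matrix.charpoly_reindex (spe n).symm (lap (G □ (⊤ : SimpleGraph (Fin 2)))),
      lap_prod_eq, charpoly_fromBlocks_symm]
    congr 2
    · abel
    · rw [hdiag2]
      unfold lap
      abel
  have hmain : ((lap (edc G)).charpoly = (lap (G □ (⊤ : SimpleGraph (Fin 2)))).charpoly) ↔
      (diagonal d + A).charpoly = (diagonal d - A).charpoly := by
    rw [hedc, hprod]
    constructor
    · exact fun h => mul_left_cancel₀ (Matrix.charpoly_monic _).ne_zero h
    · intro h; rw [h]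
  rw [hmain]
  constructor
  · intro h
    right
    have hdpos : ∀ i, 0 ≤ d i := fun i => by rw [hd]; positivity
    have hDH : (diagonal d).IsHermitian := isHermitian_diagonal _
    have hAH : A.IsHermitian := by
      have : Aᴴ = A := by
        ext i j
        rw [Matrix.conjTranspose_apply, hA]
        simp [SimpleGraph.adjMatrix_apply, G.adj_comm]
      exact this
    have htr : ∀ k, ((diagonal d + A) ^ k).trace = ((diagonal d - A) ^ k).trace :=
      fun k => trace_pow_eq_of_charpoly_eq _ _ (hDH.add hAH) (hDH.sub hAH) h k
    exact colorable_of_even_closed G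
      (even_closed_walk G (fun k hk i => trace_adj_pow_eq_zero G d hdpos htr k hk i))
  · rintro (h1 | hc)
    · subst h1
      refine conj_of_colorable G d ⟨SimpleGraph.Coloring.mk (fun _ => 0) ?_⟩
      intro a b hab
      exact absurd (Subsingleton.elim a b) (G.ne_of_adj hab)
    · exact conj_of_colorable G d hc
end

section
/- For any graph G on n vertices with m edges, LE(D^k[G]) = k·LE(G) + k(k−1)·Σᵢ|dᵢ − 2m/n|; in particular, if G is regular then LE(D^k[G]) = k·LE(G). -/
open Matrix Polynomial BigOperators
open scoped Classical

/-- The k-fold graph `D^k[G]`. -/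
def kfold {V : Type*} (G : SimpleGraph V) (k : ℕ) : SimpleGraph (V × Fin k) where
  Adj u v := G.Adj u.1 v.1
  symm := ⟨fun _ _ h => G.adj_symm h⟩
  loopless := ⟨fun u h => G.loopless.irrefl u.1 h⟩

set_option linter.unusedSectionVars false

variable {R : Type*} [CommRing R] {N : Type*} [Fintype N] [DecidableEq N]

lemma my_charpoly_conj (Q P M : Matrix N N R) (h : Q * P = 1) :
    (Q * M * P).charpoly = M.charpoly := by
  have hmap : ∀ (A B : Matrix N N R), (A * B).map (C : R →+* R[X]) = A.map C * B.map C := by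
    intro A B; exact Matrix.map_mul
  have h1 : (Q.map (C : R →+* R[X])) * (P.map C) = 1 := by
    rw [← hmap, h]; simp
  have key : charmatrix (Q * M * P) = Q.map (C : R →+* R[X]) * charmatrix M * P.map C := by
    rw [charmatrix, charmatrix]
    rw [mul_sub, sub_mul]
    congr 1
    · symm
      rw [← (scalar_commute (X : R[X]) (Commute.all _) (Q.map C)).eq, mul_assoc, h1, mul_one]
    · simp only [RingHom.mapMatrix_apply]
      rw [hmap, hmap]
  have h2 : (Q.map (C : R →+* R[X])).det * (P.map C).det = 1 := by
    rw [← det_mul, h1]; simp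
  rw [Matrix.charpoly, Matrix.charpoly, key, det_mul, det_mul,
    mul_comm (Q.map (C : R →+* R[X])).det, mul_assoc, h2, mul_one]

lemma my_charpoly_diagonal (d : N → R) :
    (diagonal d).charpoly = ∏ i, (X - C (d i)) := by
  have : charmatrix (diagonal d) = diagonal (fun i => (X : R[X]) - C (d i)) := by
    ext i j
    by_cases hij : i = j
    · subst hij; simp [charmatrix_apply_eq]
    · simp [charmatrix_apply_ne _ _ _ hij, diagonal_apply_ne _ hij]
  rw [Matrix.charpoly, this, det_diagonal]

lemma my_charpoly_blockDiagonal {o : Type*} [Fintype o] [DecidableEq o]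
    (M : o → Matrix N N R) :
    (blockDiagonal M).charpoly = ∏ i, (M i).charpoly := by
  have : charmatrix (blockDiagonal M) = blockDiagonal (fun i => charmatrix (M i)) := by
    ext ⟨u, i⟩ ⟨v, j⟩
    by_cases hij : i = j
    · subst hij
      by_cases huv : u = v
      · subst huv; simp [charmatrix_apply_eq, blockDiagonal_apply]
      · simp [blockDiagonal_apply, charmatrix_apply, diagonal_apply, huv, Prod.ext_iff]
    · simp [blockDiagonal_apply, hij, charmatrix_apply, diagonal_apply, Prod.ext_iff]
  rw [Matrix.charpoly, this, det_blockDiagonal]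
  rfl

variable {N : Type*} [Fintype N] [DecidableEq N]

lemma my_comp_inj {a : ℝ} (ha : a ≠ 0) :
    Function.Injective (fun p : ℝ[X] => p.comp (C a * X)) := by
  intro p q h
  apply Polynomial.funext
  intro z
  have h2 := congrArg (Polynomial.eval (a⁻¹ * z)) h
  simp only [Polynomial.eval_comp, eval_mul, eval_C, eval_X] at h2
  rwa [← mul_assoc, mul_inv_cancel₀ ha, one_mul] at h2

lemma my_charpoly_smul (a : ℝ) (ha : a ≠ 0)
    (M : Matrix N N ℝ) (μ : N → ℝ) (h : M.charpoly = ∏ i, (X - C (μ i))) :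
    (a • M).charpoly = ∏ i, (X - C (a * μ i)) := by
  apply my_comp_inj ha
  set φ : ℝ[X] →+* ℝ[X] := eval₂RingHom Polynomial.C (C a * X) with hφ
  have hφ_eq : ∀ p : ℝ[X], p.comp (C a * X) = φ p := fun p => rfl
  show (charpoly (a • M)).comp (C a * X) = (∏ i, (X - C (a * μ i))).comp (C a * X)
  rw [hφ_eq, hφ_eq]
  have hcm : (charmatrix (a • M)).map φ = C a • charmatrix M := by
    apply Matrix.ext
    intro i j
    rw [Matrix.map_apply, Matrix.smul_apply, smul_eq_mul]
    by_cases hij : i = j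
    · subst hij
      rw [charmatrix_apply_eq, charmatrix_apply_eq, Matrix.smul_apply, smul_eq_mul, map_sub]
      simp only [hφ, coe_eval₂RingHom, eval₂_X, eval₂_C]
      rw [C_mul]; ring
    · rw [charmatrix_apply_ne _ _ _ hij, charmatrix_apply_ne _ _ _ hij,
        Matrix.smul_apply, smul_eq_mul]
      simp only [hφ, coe_eval₂RingHom, eval₂_neg, eval₂_C]
      rw [C_mul]; ring
  have hdet : φ (charpoly (a • M)) = ((charmatrix (a • M)).map φ).det :=
    RingHom.map_det φ _
  rw [hdet, hcm, Matrix.det_smul, ← Matrix.charpoly, h, map_prod]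
  have : ∀ i : N, φ (X - C (a * μ i)) = C a * (X - C (μ i)) := by
    intro i
    rw [map_sub]
    simp only [hφ, coe_eval₂RingHom, eval₂_X, eval₂_C]
    rw [C_mul]; ring
  simp only [this]
  rw [Finset.prod_mul_distrib, Finset.prod_const, Finset.card_univ]

lemma my_hermitian_charpoly (A : Matrix N N ℝ) (hA : A.IsHermitian) :
    A.charpoly = ∏ i, (X - C (hA.eigenvalues i)) := by
  have hU : (hA.eigenvectorUnitary : Matrix N N ℝ) * star (hA.eigenvectorUnitary : Matrix N N ℝ) = 1 :=
    Matrix.mem_unitaryGroup_iff.mp (hA.eigenvectorUnitary).2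
  calc A.charpoly = ((hA.eigenvectorUnitary : Matrix N N ℝ) *
        diagonal (RCLike.ofReal ∘ hA.eigenvalues) *
        star (hA.eigenvectorUnitary : Matrix N N ℝ)).charpoly := by
        conv_lhs => rw [hA.spectral_theorem]
        rw [Unitary.conjStarAlgAut_apply]
    _ = ∏ i, (X - C (hA.eigenvalues i)) := by
        rw [my_charpoly_conj _ _ _ hU, my_charpoly_diagonal]
        simp [Function.comp]

lemma my_vecMulVec_mul {N : Type*} [Fintype N] [DecidableEq N]
    (a b c d : N → ℝ) :
    vecMulVec a b * vecMulVec c d = (b ⬝ᵥ c) • vecMulVec a d := by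
  ext i j
  simp only [Matrix.mul_apply, vecMulVec_apply, Matrix.smul_apply, smul_eq_mul, dotProduct]
  rw [Finset.sum_mul]
  congr 1
  ext l
  ring

section PQ
variable (k : ℕ) [NeZero k]

/-- all-ones vector -/
noncomputable def vu : Fin k → ℝ := fun _ => 1
/-- first standard basis vector -/
noncomputable def ve : Fin k → ℝ := fun i => if i = 0 then 1 else 0

noncomputable def Pmat : Matrix (Fin k) (Fin k) ℝ :=
  vecMulVec (vu k) (ve k) + vecMulVec (ve k) (vu k) - 1

noncomputable def Qmat : Matrix (Fin k) (Fin k) ℝ :=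
  (k : ℝ)⁻¹ • vecMulVec (vu k) (vu k) - 1 + vecMulVec (ve k) (ve k)

lemma dot_uu : (vu k) ⬝ᵥ (vu k) = (k : ℝ) := by simp [vu, dotProduct]
lemma dot_ue : (vu k) ⬝ᵥ (ve k) = 1 := by simp [vu, ve, dotProduct]
lemma dot_eu : (ve k) ⬝ᵥ (vu k) = 1 := by simp [vu, ve, dotProduct]
lemma dot_ee : (ve k) ⬝ᵥ (ve k) = 1 := by simp [ve, dotProduct]

lemma QP_eq_one : Qmat k * Pmat k = 1 := by
  have hk : (k : ℝ) ≠ 0 := Nat.cast_ne_zero.mpr (NeZero.ne k)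
  rw [Qmat, Pmat]
  simp only [sub_mul, add_mul, mul_sub, mul_add, smul_mul_assoc, mul_smul_comm,
    my_vecMulVec_mul, dot_uu, dot_ue, dot_eu, dot_ee,
    one_smul, Matrix.one_mul, Matrix.mul_one, smul_smul]
  match_scalars <;> field_simp <;> ring

lemma QJP_eq : Qmat k * vecMulVec (vu k) (vu k) * Pmat k =
    (k : ℝ) • vecMulVec (ve k) (ve k) := by
  have hk : (k : ℝ) ≠ 0 := Nat.cast_ne_zero.mpr (NeZero.ne k)
  rw [Qmat, Pmat]
  simp only [sub_mul, add_mul, mul_sub, mul_add, smul_mul_assoc, mul_smul_comm,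
    my_vecMulVec_mul, dot_uu, dot_ue, dot_eu, dot_ee,
    one_smul, Matrix.one_mul, Matrix.mul_one, smul_smul]
  match_scalars <;> field_simp <;> ring

lemma Pee_diag : vecMulVec (ve k) (ve k) = Matrix.diagonal (fun i => if i = 0 then (1:ℝ) else 0) := by
  ext i j
  simp only [vecMulVec_apply, ve, Matrix.diagonal_apply]
  by_cases hi : i = 0 <;> by_cases hj : j = 0 <;> simp_all
  · exact fun h => hj h.symm
end PQ

section graphside
variable {n : ℕ} (G : SimpleGraph (Fin n)) (k : ℕ) [NeZero k]

lemma kfold_degree (u : Fin n) (i : Fin k) :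
    (kfold G k).degree (u, i) = k * G.degree u := by
  have h : (kfold G k).neighborFinset (u, i) = G.neighborFinset u ×ˢ Finset.univ := by
    ext ⟨v, j⟩
    rw [SimpleGraph.mem_neighborFinset, Finset.mem_product, SimpleGraph.mem_neighborFinset]
    show G.Adj u v ↔ _
    rw [iff_self_and]
    intro _; exact Finset.mem_univ _
  rw [SimpleGraph.degree, h, Finset.card_product, Finset.card_univ, Fintype.card_fin,
    ← SimpleGraph.degree, mul_comm]

lemma kfold_edges : 2 * (kfold G k).edgeFinset.card = k * k * (2 * G.edgeFinset.card) := by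
  rw [← SimpleGraph.sum_degrees_eq_twice_card_edges, ← SimpleGraph.sum_degrees_eq_twice_card_edges]
  rw [Fintype.sum_prod_type]
  simp only [kfold_degree]
  simp [Finset.sum_const, smul_eq_mul, Finset.mul_sum, mul_assoc]

lemma lap_kfold_eq :
    lap (kfold G k) =
      Matrix.kroneckerMap (· * ·) (Matrix.diagonal (fun u => (G.degree u : ℝ))) ((k : ℝ) • 1) -
      Matrix.kroneckerMap (· * ·) (G.adjMatrix ℝ) (vecMulVec (vu k) (vu k)) := by
  ext ⟨u, i⟩ ⟨v, j⟩
  simp only [lap, Matrix.sub_apply, Matrix.diagonal_apply, Matrix.kroneckerMap_apply,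
    SimpleGraph.adjMatrix_apply, Matrix.smul_apply, Matrix.one_apply, vecMulVec_apply, vu,
    Prod.mk.injEq, kfold_degree, smul_eq_mul]
  have hadj : ∀ p q : Fin n × Fin k, (kfold G k).Adj p q ↔ G.Adj p.1 q.1 := fun _ _ => Iff.rfl
  by_cases huv : u = v <;> by_cases hij : i = j <;>
    simp [huv, hij, hadj, SimpleGraph.irrefl] <;> push_cast <;> ring
end graphside

section multisets
lemma my_sum_nsmul (s : Multiset ℝ) (t : ℕ) : (t • s).sum = t * s.sum := by
  induction t with
  | zero => simp
  | succ t ih => rw [succ_nsmul, Multiset.sum_add, ih]; push_cast; ring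

lemma my_prod_nsmul (s : Multiset (Polynomial ℝ)) (t : ℕ) : (t • s).prod = s.prod ^ t := by
  induction t with
  | zero => simp
  | succ t ih => rw [succ_nsmul, Multiset.prod_add, ih, pow_succ]

lemma my_multiset_eq {ι : Type*} [Fintype ι] (f : ι → ℝ) (s : Multiset ℝ)
    (h : ∏ i, (Polynomial.X - Polynomial.C (f i)) =
      (s.map fun a => Polynomial.X - Polynomial.C a).prod) :
    (Finset.univ.val.map f) = s := by
  have h1 : ((Finset.univ.val.map f).map fun a => Polynomial.X - Polynomial.C a).prod =
      (s.map fun a => Polynomial.X - Polynomial.C a).prod := by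
    rw [Multiset.map_map, ← h, Finset.prod_eq_multiset_prod]
    rfl
  have := congrArg Polynomial.roots h1
  rwa [Polynomial.roots_multiset_prod_X_sub_C, Polynomial.roots_multiset_prod_X_sub_C] at this
end multisets

section conjblock
variable {n : ℕ} (G : SimpleGraph (Fin n)) (k : ℕ) [NeZero k]

lemma conj_block :
    Matrix.kroneckerMap (· * ·) (Matrix.diagonal (fun u => (G.degree u : ℝ))) ((k : ℝ) • 1) -
      Matrix.kroneckerMap (· * ·) (G.adjMatrix ℝ)
        ((k : ℝ) • Matrix.diagonal (fun i : Fin k => if i = 0 then (1 : ℝ) else 0)) =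
    Matrix.blockDiagonal (fun i : Fin k =>
      if i = 0 then (k : ℝ) • lap G
      else (k : ℝ) • Matrix.diagonal (fun u => (G.degree u : ℝ))) := by
  ext ⟨u, i⟩ ⟨v, j⟩
  rw [Matrix.blockDiagonal_apply]
  by_cases hij : i = j
  · subst hij
    rw [if_pos rfl]
    by_cases hi0 : i = 0 <;> by_cases huv : u = v <;>
      simp [lap, hi0, huv, Matrix.diagonal_apply, SimpleGraph.adjMatrix_apply,
        SimpleGraph.irrefl, Matrix.one_apply] <;> ring
  · rw [if_neg hij]
    simp [Matrix.diagonal_apply, hij, Matrix.one_apply]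
end conjblock

lemma finset_prod_as_multiset {ι : Type*} [Fintype ι] (f : ι → ℝ) :
    ((Finset.univ.val.map f).map fun a => Polynomial.X - Polynomial.C a).prod =
      ∏ i, (Polynomial.X - Polynomial.C (f i)) := by
  rw [Multiset.map_map, Finset.prod_eq_multiset_prod]
  rfl

lemma finset_sum_as_multiset {ι : Type*} [Fintype ι] (f : ι → ℝ) (F : ℝ → ℝ) :
    ∑ i, F (f i) = ((Finset.univ.val.map f).map F).sum := by
  rw [Multiset.map_map, Finset.sum_eq_multiset_sum]
  rfl

/-- For any graph `G` on `n` vertices with `m` edges,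
`LE(D^k[G]) = k·LE(G) + k(k−1)·Σᵢ|dᵢ − 2m/n|`; in particular, if `G` is regular
then `LE(D^k[G]) = k·LE(G)`.  Here `LE(H) = Σ |νᵢ − 2M/N|` over the Laplacian
eigenvalues `νᵢ` of a graph `H` with `N` vertices and `M` edges. -/
theorem stmt17 {n : ℕ} (G : SimpleGraph (Fin n)) (m : ℕ)
    (hm : G.edgeFinset.card = m)
    (hL : (lap G).IsHermitian) (k : ℕ) (hk : 1 ≤ k)
    (hLk : (lap (kfold G k)).IsHermitian) :
    (∑ p, |hLk.eigenvalues p -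
        2 * ((kfold G k).edgeFinset.card : ℝ) / (Fintype.card (Fin n × Fin k))| =
      (k : ℝ) * (∑ i, |hL.eigenvalues i - 2 * (m : ℝ) / (n : ℝ)|) +
        (k : ℝ) * ((k : ℝ) - 1) * ∑ i, |(G.degree i : ℝ) - 2 * (m : ℝ) / (n : ℝ)|) ∧
    (∀ r : ℕ, G.IsRegularOfDegree r →
      ∑ p, |hLk.eigenvalues p -
          2 * ((kfold G k).edgeFinset.card : ℝ) / (Fintype.card (Fin n × Fin k))| =
        (k : ℝ) * ∑ i, |hL.eigenvalues i - 2 * (m : ℝ) / (n : ℝ)|) := by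
  haveI : NeZero k := ⟨Nat.one_le_iff_ne_zero.mp hk⟩
  have hk0 : (k : ℝ) ≠ 0 := Nat.cast_ne_zero.mpr (NeZero.ne k)
  -- trivial case n = 0
  rcases Nat.eq_zero_or_pos n with hn | hn
  · subst hn
    constructor
    · simp
    · intro r _
      simp
  have hn0 : (n : ℝ) ≠ 0 := Nat.cast_ne_zero.mpr (Nat.pos_iff_ne_zero.mp hn)
  set dd : Fin n → ℝ := fun u => (G.degree u : ℝ) with hdd
  set ev : Fin n → ℝ := hL.eigenvalues with hev
  set ν : Fin n × Fin k → ℝ := hLk.eigenvalues with hν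
  -- edge count
  have hE : ((kfold G k).edgeFinset.card : ℝ) = (k : ℝ) * (k : ℝ) * m := by
    have h1 := kfold_edges G k
    rw [hm] at h1
    have h2 : (kfold G k).edgeFinset.card = k * k * m := by
      have : 2 * (kfold G k).edgeFinset.card = 2 * (k * k * m) := by rw [h1]; ring
      omega
    rw [h2]; push_cast; ring
  -- the constant
  set c : ℝ := 2 * ((kfold G k).edgeFinset.card : ℝ) / (Fintype.card (Fin n × Fin k)) with hc
  have hcval : c = (k : ℝ) * (2 * (m : ℝ) / (n : ℝ)) := by
    rw [hc, hE]
    have : (Fintype.card (Fin n × Fin k) : ℝ) = (n : ℝ) * (k : ℝ) := by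
      simp [Fintype.card_prod]
    rw [this]
    field_simp
  -- conjugation, block diagonal, charpoly
  set P := Pmat k
  set Q := Qmat k
  set Pk := Matrix.kroneckerMap (· * ·) (1 : Matrix (Fin n) (Fin n) ℝ) P with hPk
  set Qk := Matrix.kroneckerMap (· * ·) (1 : Matrix (Fin n) (Fin n) ℝ) Q with hQk
  have hQkPk : Qk * Pk = 1 := by
    rw [hPk, hQk, ← Matrix.mul_kronecker_mul, one_mul, QP_eq_one, Matrix.one_kronecker_one]
  set Bf : Fin k → Matrix (Fin n) (Fin n) ℝ := fun i =>
    if i = 0 then (k : ℝ) • lap G else (k : ℝ) • Matrix.diagonal dd with hBf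
  have hblock : Qk * lap (kfold G k) * Pk = Matrix.blockDiagonal Bf := by
    rw [lap_kfold_eq G k, mul_sub, sub_mul, hPk, hQk]
    simp only [← Matrix.mul_kronecker_mul]
    have h1 : Q * ((k : ℝ) • 1) * P = (k : ℝ) • 1 := by
      rw [mul_smul_comm, mul_one, smul_mul_assoc, QP_eq_one]
    rw [one_mul, one_mul, mul_one, mul_one, h1, QJP_eq, Pee_diag]
    exact conj_block G k
  have hcharp : (lap (kfold G k)).charpoly =
      (∏ u, (X - C ((k : ℝ) * ev u))) * (∏ u, (X - C ((k : ℝ) * dd u))) ^ (k - 1) := by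
    have h1 : (lap (kfold G k)).charpoly = (Matrix.blockDiagonal Bf).charpoly := by
      rw [← hblock, my_charpoly_conj _ _ _ hQkPk]
    rw [h1, my_charpoly_blockDiagonal,
      ← Finset.mul_prod_erase Finset.univ _ (Finset.mem_univ (0 : Fin k))]
    have hB0 : (Bf 0).charpoly = ∏ u, (X - C ((k : ℝ) * ev u)) := by
      rw [hBf]
      simp only [if_pos rfl]
      exact my_charpoly_smul _ hk0 _ _ (my_hermitian_charpoly _ hL)
    have hBi : ∀ i ∈ Finset.univ.erase (0 : Fin k),
        (Bf i).charpoly = ∏ u, (X - C ((k : ℝ) * dd u)) := by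
      intro i hi
      rw [Finset.mem_erase] at hi
      rw [hBf]
      simp only [if_neg hi.1]
      have hdiag : (k : ℝ) • Matrix.diagonal dd = Matrix.diagonal (fun u => (k : ℝ) * dd u) := by
        ext a b
        by_cases hab : a = b <;> simp [hab, Matrix.diagonal_apply]
      rw [hdiag, my_charpoly_diagonal]
    rw [hB0, Finset.prod_congr rfl hBi, Finset.prod_const,
      Finset.card_erase_of_mem (Finset.mem_univ _), Finset.card_univ, Fintype.card_fin]
  -- multiset of eigenvalues
  have hkey : Finset.univ.val.map ν =
      (Finset.univ.val.map fun u => (k : ℝ) * ev u) +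
        (k - 1) • (Finset.univ.val.map fun u => (k : ℝ) * dd u) := by
    apply my_multiset_eq
    rw [Multiset.map_add, Multiset.prod_add, Multiset.map_nsmul, my_prod_nsmul,
      finset_prod_as_multiset, finset_prod_as_multiset, hν,
      ← my_hermitian_charpoly _ hLk, hcharp]
  -- main computation
  have habs : ∀ x : ℝ, |(k : ℝ) * x - c| = (k : ℝ) * |x - 2 * (m : ℝ) / (n : ℝ)| := by
    intro x
    rw [hcval, ← mul_sub, abs_mul, abs_of_nonneg (by positivity : (0:ℝ) ≤ (k:ℝ))]
  have hmain : ∑ p, |ν p - c| =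
      (k : ℝ) * (∑ i, |ev i - 2 * (m : ℝ) / (n : ℝ)|) +
        (k : ℝ) * ((k : ℝ) - 1) * ∑ i, |dd i - 2 * (m : ℝ) / (n : ℝ)| := by
    rw [finset_sum_as_multiset ν (fun x => |x - c|), hkey, Multiset.map_add, Multiset.sum_add,
      Multiset.map_nsmul, my_sum_nsmul,
      ← finset_sum_as_multiset _ (fun x => |x - c|), ← finset_sum_as_multiset _ (fun x => |x - c|)]
    simp only [habs]
    rw [Nat.cast_sub hk, Nat.cast_one, ← Finset.mul_sum, ← Finset.mul_sum]
    ring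
  constructor
  · exact hmain
  · intro r hreg
    rw [hmain]
    have hsum0 : ∑ i, |dd i - 2 * (m : ℝ) / (n : ℝ)| = 0 := by
      have h2m : 2 * (m : ℝ) / (n : ℝ) = r := by
        have := SimpleGraph.sum_degrees_eq_twice_card_edges G
        rw [hm] at this
        have hs : ∑ v, G.degree v = n * r := by
          rw [Finset.sum_congr rfl (fun v _ => hreg v), Finset.sum_const, Finset.card_univ,
            Fintype.card_fin, smul_eq_mul]
        have h3 : n * r = 2 * m := hs.symm.trans this
        have h4 : (n : ℝ) * r = 2 * m := by exact_mod_cast h3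
        field_simp
        linarith [h4]
      apply Finset.sum_eq_zero
      intro u _
      rw [hdd]
      simp only [hreg u, h2m]
      simp
    rw [hsum0]
    ring
end
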